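/- Let (C,α,x) be an elusive triple in H(m,q) where the code C has minimum distance δ ≥ 3, and let π, π' be distinct (C,α,x)-associates. Then 1 ≤ MC(π,π') ≤ 3. -/

import Mathlib

variable {M Q : Type*}

/-- The set of entries in which two vertices of the Hamming graph differ. -/
def diffSet [Fintype M] [DecidableEq Q] (α β : M → Q) : Finset M :=
  Finset.univ.filter fun i => α i ≠ β i

/-- `GammaSet α r` is the set of vertices at Hamming distance exactly `r` from `α`. -/
def GammaSet [Fintype M] [DecidableEq Q] (α : M → Q) (r : ℕ) : Set (M → Q) :=
  {β | hammingDist α β = r}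

/-- The neighbour set `C₁` of a code `C`. -/
def neighbourSet [Fintype M] [DecidableEq Q] (C : Set (M → Q)) : Set (M → Q) :=
  {ν | ν ∉ C ∧ ∃ c ∈ C, hammingDist ν c = 1}

/-- An automorphism of the Hamming graph: a bijection of vertices preserving Hamming distance. -/
def IsAut [Fintype M] [DecidableEq Q] (x : (M → Q) ≃ (M → Q)) : Prop :=
  ∀ a b, hammingDist (x a) (x b) = hammingDist a b

/-- An elusive triple `(C, α, x)`. -/
def IsElusiveTriple [Fintype M] [DecidableEq Q] (C : Set (M → Q)) (α : M → Q)
    (x : (M → Q) ≃ (M → Q)) : Prop :=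
  IsAut x ∧ x '' neighbourSet C = neighbourSet C ∧ α ∈ C ∧ x α ∉ C

/-- A `(C,α,x)`-associate: a vertex in `Γ₂(α) ∩ C^x`. -/
def IsAssociate [Fintype M] [DecidableEq Q] (C : Set (M → Q)) (α : M → Q)
    (x : (M → Q) ≃ (M → Q)) (π : M → Q) : Prop :=
  π ∈ GammaSet α 2 ∧ π ∈ x '' C

/-- `MC C π π' = |C ∩ Γ₂(π) ∩ Γ₂(π')|`, the number of mutual codewords. -/
noncomputable def MC [Fintype M] [DecidableEq Q] (C : Set (M → Q)) (π π' : M → Q) : ℕ :=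
  (C ∩ GammaSet π 2 ∩ GammaSet π' 2).ncard

/-- The code `C` has minimum distance `δ`. -/
def HasMinDist [Fintype M] [DecidableEq Q] (C : Set (M → Q)) (δ : ℕ) : Prop :=
  IsLeast {d : ℕ | ∃ a ∈ C, ∃ b ∈ C, a ≠ b ∧ hammingDist a b = d} δ

/-- `IsCodeDist C β k` says that `d(β, C) = k`. -/
def IsCodeDist [Fintype M] [DecidableEq Q] (C : Set (M → Q)) (β : M → Q) (k : ℕ) : Prop :=
  IsLeast {d : ℕ | ∃ γ ∈ C, hammingDist β γ = d} k

/-- `update2 α i j a b` is the vertex `γ(α|i,j|a,b)`. -/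
def update2 [DecidableEq M] (α : M → Q) (i j : M) (a b : Q) : M → Q :=
  Function.update (Function.update α i a) j b

/-- `update3 α i j k a b c` is the vertex `γ(α|i,j,k|a,b,c)`. -/
def update3 [DecidableEq M] (α : M → Q) (i j k : M) (a b c : Q) : M → Q :=
  Function.update (Function.update (Function.update α i a) j b) k c

set_option linter.unusedSectionVars false
section Helpers

variable [Fintype M] [DecidableEq M] [DecidableEq Q]

lemma mem_diffSet {a b : M → Q} {i : M} : i ∈ diffSet a b ↔ a i ≠ b i := by
  simp [diffSet]

lemma diffSet_card (a b : M → Q) : (diffSet a b).card = hammingDist a b := rfl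

lemma diffSet_comm (a b : M → Q) : diffSet a b = diffSet b a := by
  ext i; simp [diffSet, ne_comm]

lemma diffSet_triangle (a b c : M → Q) : diffSet a c ⊆ diffSet a b ∪ diffSet b c := by
  intro i hi
  rw [Finset.mem_union, mem_diffSet, mem_diffSet]
  by_contra h
  push_neg at h
  exact mem_diffSet.mp hi (h.1.trans h.2)

lemma diffSet_subset_of_two (π π' β : M → Q) (hd : 3 ≤ hammingDist π π')
    (h1 : hammingDist π β = 2) (h2 : hammingDist π' β = 2) :
    diffSet π β ⊆ diffSet π π' := by
  intro s hs
  by_contra hsD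
  have hπs : π s = π' s := not_ne_iff.mp (fun h => hsD (mem_diffSet.mpr h))
  have hsT : s ∈ diffSet π' β := mem_diffSet.mpr (by rw [← hπs]; exact mem_diffSet.mp hs)
  have hDsub : diffSet π π' ⊆ diffSet π β ∪ diffSet π' β := by
    have h := diffSet_triangle π β π'
    rwa [diffSet_comm β π'] at h
  have hDsub' : diffSet π π' ⊆ (diffSet π β ∪ diffSet π' β).erase s :=
    Finset.subset_erase.mpr ⟨hDsub, hsD⟩
  have hcu := Finset.card_union_add_card_inter (diffSet π β) (diffSet π' β)
  have hs1 : 1 ≤ (diffSet π β ∩ diffSet π' β).card :=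
    Finset.card_pos.mpr ⟨s, Finset.mem_inter.mpr ⟨hs, hsT⟩⟩
  have hc1 : (diffSet π β).card = 2 := by rw [diffSet_card, h1]
  have hc2 : (diffSet π' β).card = 2 := by rw [diffSet_card, h2]
  have hle : (diffSet π π').card ≤ ((diffSet π β ∪ diffSet π' β).erase s).card :=
    Finset.card_le_card hDsub'
  rw [Finset.card_erase_of_mem (Finset.mem_union_left _ hs)] at hle
  have hdd : (diffSet π π').card = hammingDist π π' := diffSet_card _ _
  omega

lemma key_count [Fintype Q] (π π' : M → Q) (X : Set (M → Q))
    (hd : 3 ≤ hammingDist π π')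
    (h2 : ∀ β ∈ X, hammingDist π β = 2 ∧ hammingDist π' β = 2)
    (h3 : ∀ β ∈ X, ∀ γ ∈ X, β ≠ γ → 3 ≤ hammingDist β γ) :
    X.ncard ≤ 3 := by
  classical
  rcases X.eq_empty_or_nonempty with hE | ⟨β₀, hβ₀⟩
  · simp [hE]
  set D := diffSet π π' with hDdef
  have hDcard : 3 ≤ D.card := by rw [hDdef, diffSet_card]; exact hd
  have hSsub : ∀ β ∈ X, diffSet π β ⊆ D := fun β hβ =>
    diffSet_subset_of_two π π' β hd (h2 β hβ).1 (h2 β hβ).2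
  have hTsub : ∀ β ∈ X, diffSet π' β ⊆ D := fun β hβ => by
    rw [hDdef, diffSet_comm π π']
    exact diffSet_subset_of_two π' π β (by rwa [hammingDist_comm]) (h2 β hβ).2 (h2 β hβ).1
  have hScard : ∀ β ∈ X, (diffSet π β).card = 2 := fun β hβ => by
    rw [diffSet_card]; exact (h2 β hβ).1
  have hTcard : ∀ β ∈ X, (diffSet π' β).card = 2 := fun β hβ => by
    rw [diffSet_card]; exact (h2 β hβ).2
  -- injectivity of β ↦ diffSet π β on X
  have hinj : Set.InjOn (fun β => diffSet π β) X := by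
    intro β hβ γ hγ hSeq
    simp only at hSeq
    by_contra hne
    have h3' := h3 β hβ γ hγ hne
    have hsub : diffSet β γ ⊆ diffSet π β := by
      intro i hi
      have h := diffSet_triangle β π γ hi
      rw [diffSet_comm β π, ← hSeq, Finset.union_self] at h
      exact h
    have hle := Finset.card_le_card hsub
    rw [diffSet_card β γ] at hle
    have hcb := hScard β hβ
    omega
  -- D has at most 4 elements
  have hD4 : D.card ≤ 4 := by
    have hsub : D ⊆ diffSet π β₀ ∪ diffSet π' β₀ := by
      have h := diffSet_triangle π β₀ π'
      rw [diffSet_comm β₀ π'] at h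
      exact h
    have hle := Finset.card_le_card hsub
    have := Finset.card_union_le (diffSet π β₀) (diffSet π' β₀)
    have := hScard β₀ hβ₀
    have := hTcard β₀ hβ₀
    omega
  rcases (by omega : D.card = 3 ∨ D.card = 4) with hD3 | hD4'
  · -- |D| = 3 : inject into 2-subsets of D
    have hmaps : ∀ β ∈ X, diffSet π β ∈ (D.powersetCard 2 : Finset (Finset M)) := by
      intro β hβ
      rw [Finset.mem_powersetCard]
      exact ⟨hSsub β hβ, hScard β hβ⟩
    have hle := Set.ncard_le_ncard_of_injOn (fun β => diffSet π β)
      (fun β hβ => by simpa using hmaps β hβ) hinj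
      (Set.toFinite (↑(D.powersetCard 2) : Set (Finset M)))
    rw [Set.ncard_coe_finset, Finset.card_powersetCard, hD3] at hle
    simpa using hle
  · -- |D| = 4 : S_β's are pairwise disjoint, so at most 2 elements
    have hsplit : ∀ β ∈ X, Disjoint (diffSet π β) (diffSet π' β) ∧
        diffSet π β ∪ diffSet π' β = D := by
      intro β hβ
      have hsub : D ⊆ diffSet π β ∪ diffSet π' β := by
        have h := diffSet_triangle π β π'
        rwa [diffSet_comm β π'] at h
      have hsub' : diffSet π β ∪ diffSet π' β ⊆ D :=
        Finset.union_subset (hSsub β hβ) (hTsub β hβ)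
      have hEq : diffSet π β ∪ diffSet π' β = D := le_antisymm hsub' hsub
      have hcu := Finset.card_union_add_card_inter (diffSet π β) (diffSet π' β)
      have h1 := hScard β hβ
      have h2' := hTcard β hβ
      rw [hEq, hD4'] at hcu
      have hint : (diffSet π β ∩ diffSet π' β).card = 0 := by omega
      exact ⟨Finset.disjoint_iff_inter_eq_empty.mpr (Finset.card_eq_zero.mp hint), hEq⟩
    have hdisj : ∀ β ∈ X, ∀ γ ∈ X, β ≠ γ → Disjoint (diffSet π β) (diffSet π γ) := by
      intro β hβ γ hγ hne
      rw [Finset.disjoint_left]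
      intro k hkβ hkγ
      have hval : ∀ ρ ∈ X, k ∈ diffSet π ρ → ρ k = π' k := by
        intro ρ hρ hk
        have hkD : k ∈ D := hSsub ρ hρ hk
        have hkT : k ∉ diffSet π' ρ :=
          Finset.disjoint_left.mp (hsplit ρ hρ).1 hk
        have := mem_diffSet.not.mp hkT
        push_neg at this
        exact this.symm
      have hβk := hval β hβ hkβ
      have hγk := hval γ hγ hkγ
      -- S_β ≠ S_γ, so their intersection has card 1, union card 3
      have hSne : diffSet π β ≠ diffSet π γ := fun h => hne (hinj hβ hγ h)
      have hi1 : 1 ≤ (diffSet π β ∩ diffSet π γ).card :=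
        Finset.card_pos.mpr ⟨k, Finset.mem_inter.mpr ⟨hkβ, hkγ⟩⟩
      have hi2 : (diffSet π β ∩ diffSet π γ).card ≠ 2 := by
        intro h
        apply hSne
        have h1 : diffSet π β ∩ diffSet π γ = diffSet π β :=
          Finset.eq_of_subset_of_card_le Finset.inter_subset_left
            (by rw [h, hScard β hβ])
        have h2' : diffSet π β ∩ diffSet π γ = diffSet π γ :=
          Finset.eq_of_subset_of_card_le Finset.inter_subset_right
            (by rw [h, hScard γ hγ])
        rw [← h1, h2']
      have hile : (diffSet π β ∩ diffSet π γ).card ≤ (diffSet π β).card :=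
        Finset.card_le_card Finset.inter_subset_left
      have hcu := Finset.card_union_add_card_inter (diffSet π β) (diffSet π γ)
      have hucard : (diffSet π β ∪ diffSet π γ).card = 3 := by
        have := hScard β hβ; have := hScard γ hγ; omega
      have hsub : diffSet β γ ⊆ diffSet π β ∪ diffSet π γ := by
        have h := diffSet_triangle β π γ
        rwa [diffSet_comm β π] at h
      have heq : diffSet β γ = diffSet π β ∪ diffSet π γ := by
        apply Finset.eq_of_subset_of_card_le hsub
        rw [hucard, diffSet_card]
        exact h3 β hβ γ hγ hne
      have hkd : k ∈ diffSet β γ := by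
        rw [heq]; exact Finset.mem_union_left _ hkβ
      exact mem_diffSet.mp hkd (by rw [hβk, hγk])
    -- at most 2 elements
    have h2lt : ¬ 2 < X.ncard := by
      rw [Set.two_lt_ncard (Set.toFinite X)]
      rintro ⟨a, ha, b, hb, c, hc, hab, hac, hbc⟩
      have hD2 : diffSet π a ∪ diffSet π b = D := by
        apply Finset.eq_of_subset_of_card_le
          (Finset.union_subset (hSsub a ha) (hSsub b hb))
        rw [Finset.card_union_of_disjoint (hdisj a ha b hb hab), hScard a ha,
          hScard b hb, hD4']
      have hcsub : diffSet π c ⊆ diffSet π a ∪ diffSet π b := by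
        rw [hD2]; exact hSsub c hc
      have : diffSet π c = ∅ := by
        rw [← Finset.subset_empty]
        intro i hi
        rcases Finset.mem_union.mp (hcsub hi) with h | h
        · exact absurd hi (Finset.disjoint_left.mp (hdisj a ha c hc hac) h)
        · exact absurd hi (Finset.disjoint_left.mp (hdisj b hb c hc hbc) h)
      have hc2 := hScard c hc
      rw [this] at hc2
      simp at hc2
    omega

end Helpers

/-- For an elusive triple with minimum distance `δ ≥ 3` and distinct
associates `π, π'`, we have `1 ≤ MC(π,π') ≤ 3`. -/
theorem stmt_8 (m q : ℕ) (C : Set (Fin m → Fin q)) (α : Fin m → Fin q)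
    (x : (Fin m → Fin q) ≃ (Fin m → Fin q))
    (hET : IsElusiveTriple C α x) (hδ : ∃ δ : ℕ, 3 ≤ δ ∧ HasMinDist C δ)
    (π π' : Fin m → Fin q)
    (hπ : IsAssociate C α x π) (hπ' : IsAssociate C α x π') (hne : π ≠ π') :
    1 ≤ MC C π π' ∧ MC C π π' ≤ 3 := by
  classical
  obtain ⟨δ, hδ3, hmin⟩ := hδ
  obtain ⟨haut, -, hαC, -⟩ := hET
  set X : Set (Fin m → Fin q) := C ∩ GammaSet π 2 ∩ GammaSet π' 2 with hXdef
  have hXmem : ∀ β, β ∈ X ↔ β ∈ C ∧ hammingDist π β = 2 ∧ hammingDist π' β = 2 := by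
    intro β
    simp [hXdef, GammaSet, Set.mem_setOf_eq, and_assoc]
  -- lower bound: α ∈ X
  have hαX : α ∈ X := by
    rw [hXmem]
    refine ⟨hαC, ?_, ?_⟩
    · rw [hammingDist_comm]; exact hπ.1
    · rw [hammingDist_comm]; exact hπ'.1
  have hlow : 1 ≤ MC C π π' := by
    have : 0 < X.ncard := (Set.ncard_pos (Set.toFinite X)).mpr ⟨α, hαX⟩
    exact this
  -- distance between π and π' is at least 3
  obtain ⟨γ, hγC, hγ⟩ := hπ.2
  obtain ⟨γ', hγ'C, hγ'⟩ := hπ'.2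
  have hγne : γ ≠ γ' := by
    intro h
    apply hne
    rw [← hγ, ← hγ', h]
  have hd : 3 ≤ hammingDist π π' := by
    have h1 : hammingDist π π' = hammingDist γ γ' := by
      rw [← hγ, ← hγ']; exact haut γ γ'
    have h2 : δ ≤ hammingDist γ γ' :=
      hmin.2 ⟨γ, hγC, γ', hγ'C, hγne, rfl⟩
    omega
  have hup : X.ncard ≤ 3 := by
    apply key_count π π' X hd
    · intro β hβ
      exact ((hXmem β).mp hβ).2
    · intro β hβ γ₀ hγ₀ hne'
      have h2 : δ ≤ hammingDist β γ₀ :=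
        hmin.2 ⟨β, ((hXmem β).mp hβ).1, γ₀, ((hXmem γ₀).mp hγ₀).1, hne', rfl⟩
      omega
  exact ⟨hlow, by simpa [MC, hXdef] using hup⟩
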